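/- For all real numbers x, y in the interval [-C, C] with C ≥ 2, we have σ(x)(1-σ(x))(y-x)² ≤ 2C·D(σ(x)‖σ(y)), where σ(x) = e^x/(1+e^x) is the logistic function and D(p‖q) = p·log(p/q) + (1-p)·log((1-p)/(1-q)) is the Kullback-Leibler divergence between Bernoulli distributions. -/

import Mathlib

set_option maxHeartbeats 1000000

noncomputable def logistic (x : ℝ) : ℝ := Real.exp x / (1 + Real.exp x)

noncomputable def klBer (p q : ℝ) : ℝ :=
  p * Real.log (p / q) + (1 - p) * Real.log ((1 - p) / (1 - q))

lemma one_sub_logistic (x : ℝ) : 1 - logistic x = 1 / (1 + Real.exp x) := by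
  have h : (0:ℝ) < 1 + Real.exp x := by positivity
  unfold logistic
  field_simp
  ring

lemma logistic_neg (x : ℝ) : logistic (-x) = 1 - logistic x := by
  have h : (0:ℝ) < 1 + Real.exp x := by positivity
  have h2 : Real.exp x ≠ 0 := (Real.exp_pos x).ne'
  unfold logistic
  rw [Real.exp_neg]
  field_simp
  ring

lemma klBer_one_sub (p q : ℝ) : klBer (1 - p) (1 - q) = klBer p q := by
  unfold klBer
  simp only [sub_sub_cancel]
  ring

/-- KL between Bernoullis as Bregman divergence of softplus. -/
lemma kl_eq (x y : ℝ) :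
    klBer (logistic x) (logistic y)
      = Real.log (1 + Real.exp y) - Real.log (1 + Real.exp x) - logistic x * (y - x) := by
  have hax : (0:ℝ) < 1 + Real.exp x := by positivity
  have hay : (0:ℝ) < 1 + Real.exp y := by positivity
  have hpx : (0:ℝ) < logistic x := by unfold logistic; positivity
  have hpy : (0:ℝ) < logistic y := by unfold logistic; positivity
  have l1 : Real.log (logistic x / logistic y)
      = x - Real.log (1 + Real.exp x) - (y - Real.log (1 + Real.exp y)) := by
    rw [Real.log_div hpx.ne' hpy.ne']
    unfold logistic
    rw [Real.log_div (Real.exp_pos x).ne' hax.ne', Real.log_div (Real.exp_pos y).ne' hay.ne',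
      Real.log_exp, Real.log_exp]
  have l2 : Real.log ((1 - logistic x) / (1 - logistic y))
      = Real.log (1 + Real.exp y) - Real.log (1 + Real.exp x) := by
    rw [one_sub_logistic, one_sub_logistic, one_div, one_div,
      Real.log_div (inv_ne_zero hax.ne') (inv_ne_zero hay.ne'), Real.log_inv, Real.log_inv]
    ring
  unfold klBer
  rw [l1, l2, one_sub_logistic]
  have hx : logistic x = Real.exp x / (1 + Real.exp x) := rfl
  rw [hx]
  field_simp
  ring

/-- `exp u * (C - u) ≥ C` for `0 ≤ u ≤ C - 1`. -/
lemma exp_fact (C u : ℝ) (hu : 0 ≤ u) (huC : u ≤ C - 1) :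
    C ≤ Real.exp u * (C - u) := by
  have h := Real.add_one_le_exp u
  have h2 : (u + 1) * (C - u) ≤ Real.exp u * (C - u) :=
    mul_le_mul_of_nonneg_right h (by linarith)
  nlinarith [mul_nonneg hu (by linarith : (0:ℝ) ≤ C - 1 - u)]

/-- `G(u) = C(e^u - 1) - u + e^C (C-u) - C e^(C-u) ≥ 0` for `C - 1 ≤ u ≤ 2C`, `C ≥ 2`. -/
lemma G_nonneg (C u : ℝ) (hC : 2 ≤ C) (hu1 : C - 1 ≤ u) (hu2C : u ≤ 2 * C) :
    0 ≤ C * (Real.exp u - 1) - u + Real.exp C * (C - u) - C * Real.exp (C - u) := by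
  have hCpos : (0:ℝ) ≤ C := by linarith
  have he1lt : Real.exp 1 < 2.7182818286 := Real.exp_one_lt_d9
  have he1gt : 2.7182818283 < Real.exp 1 := Real.exp_one_gt_d9
  rcases le_total u C with huc | huc
  · -- C - 1 ≤ u ≤ C
    have hDpos : (0:ℝ) < Real.exp (C - 1) := Real.exp_pos _
    have hEc1 : Real.exp (C - 1) * (u - C + 2) ≤ Real.exp u := by
      have hh1 : (u - C + 1) + 1 ≤ Real.exp (u - C + 1) := Real.add_one_le_exp _
      have hh2 : Real.exp (C - 1) * Real.exp (u - C + 1) = Real.exp u := by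
        rw [← Real.exp_add]; ring_nf
      nlinarith [mul_le_mul_of_nonneg_left hh1 hDpos.le]
    have hcu : Real.exp (C - u) ≤ Real.exp 1 := Real.exp_le_exp.mpr (by linarith)
    have hc1 : Real.exp 1 * (C - 1) ≤ Real.exp (C - 1) := by
      have hh1 : (C - 2) + 1 ≤ Real.exp (C - 2) := Real.add_one_le_exp _
      have hh2 : Real.exp 1 * Real.exp (C - 2) = Real.exp (C - 1) := by
        rw [← Real.exp_add]; ring_nf
      nlinarith [Real.exp_pos 1]
    have hEC : Real.exp C = Real.exp 1 * Real.exp (C - 1) := by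
      rw [← Real.exp_add]; ring_nf
    rw [hEC]
    have hA : C * (Real.exp (C - 1) * (u - C + 2)) ≤ C * Real.exp u :=
      mul_le_mul_of_nonneg_left hEc1 hCpos
    have hB : C * Real.exp (C - u) ≤ C * Real.exp 1 :=
      mul_le_mul_of_nonneg_left hcu hCpos
    have hbr : 4 ≤ C * (u - C + 2) + Real.exp 1 * (C - u) := by
      nlinarith [mul_nonneg (by linarith : (0:ℝ) ≤ C - 2) (by linarith : (0:ℝ) ≤ u - C + 2),
        mul_nonneg (by linarith : (0:ℝ) ≤ Real.exp 1 - 2) (by linarith : (0:ℝ) ≤ C - u)]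
    have hD4 : 4 * Real.exp (C - 1)
        ≤ Real.exp (C - 1) * (C * (u - C + 2) + Real.exp 1 * (C - u)) := by
      have := mul_le_mul_of_nonneg_left hbr hDpos.le
      linarith
    have step1 : 0 ≤ 4 * Real.exp (C - 1) - 2 * C - C * Real.exp 1 := by
      nlinarith [hc1, he1gt,
        mul_nonneg (by linarith : (0:ℝ) ≤ Real.exp 1 - 2) (by linarith : (0:ℝ) ≤ C - 2)]
    have step2 : 0 ≤ C * (Real.exp (C - 1) * (u - C + 2)) - C - u
        + Real.exp 1 * Real.exp (C - 1) * (C - u) - C * Real.exp 1 := by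
      nlinarith [hD4, step1, huc]
    linarith [hA, hB, step2]
  · -- C ≤ u ≤ 2C
    have hEc : Real.exp C * (u - C + 1) ≤ Real.exp u := by
      have hh1 : (u - C) + 1 ≤ Real.exp (u - C) := Real.add_one_le_exp _
      have hh2 : Real.exp C * Real.exp (u - C) = Real.exp u := by
        rw [← Real.exp_add]; ring_nf
      nlinarith [mul_le_mul_of_nonneg_left hh1 (Real.exp_pos C).le]
    have hcu1 : Real.exp (C - u) ≤ 1 := Real.exp_le_one_iff.mpr (by linarith)
    have hC3 : 3 ≤ Real.exp C := by
      have := Real.add_one_le_exp C; linarith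
    have hA : C * (Real.exp C * (u - C + 1)) ≤ C * Real.exp u :=
      mul_le_mul_of_nonneg_left hEc hCpos
    have hB : C * Real.exp (C - u) ≤ C * 1 :=
      mul_le_mul_of_nonneg_left hcu1 hCpos
    have t1 : 0 ≤ (u - C) * (Real.exp C * (C - 1) - 1) := by
      apply mul_nonneg (by linarith)
      nlinarith [hC3]
    have t2 : 0 ≤ C * (Real.exp C - 3) := mul_nonneg hCpos (by linarith)
    have step2 : 0 ≤ C * (Real.exp C * (u - C + 1)) - C - u
        + Real.exp C * (C - u) - C * 1 := by nlinarith [t1, t2]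
    linarith [hA, hB, step2]

/-- Main scalar inequality: `C(σ(t) - σ(x)) ≥ σ'(x)(t - x)` for `-C ≤ x ≤ t ≤ C`. -/
lemma key (C x t : ℝ) (hC : 2 ≤ C) (hx : -C ≤ x) (hxt : x ≤ t) (ht : t ≤ C) :
    logistic x * (1 - logistic x) * (t - x) ≤ C * (logistic t - logistic x) := by
  have ha : 0 < Real.exp x := Real.exp_pos x
  have hb : 0 < Real.exp t := Real.exp_pos t
  have h1a : (0:ℝ) < 1 + Real.exp x := by linarith
  have h1b : (0:ℝ) < 1 + Real.exp t := by linarith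
  have e1 : logistic x * (1 - logistic x) = Real.exp x / (1 + Real.exp x) ^ 2 := by
    rw [one_sub_logistic]
    unfold logistic
    field_simp
  have e2 : logistic t - logistic x
      = (Real.exp t - Real.exp x) / ((1 + Real.exp x) * (1 + Real.exp t)) := by
    unfold logistic
    field_simp
    ring
  rw [e1, e2, div_mul_eq_mul_div, mul_div_assoc']
  rw [div_le_div_iff₀ (by positivity) (by positivity)]
  suffices hP : Real.exp x * (1 + Real.exp t) * (t - x)
      ≤ C * (Real.exp t - Real.exp x) * (1 + Real.exp x) by
    nlinarith [mul_le_mul_of_nonneg_left hP h1a.le]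
  -- now the polynomial core
  set a := Real.exp x with ha_def
  set b := Real.exp t with hb_def
  set u := t - x with hu_def
  have hu : 0 ≤ u := by rw [hu_def]; linarith
  have hu2C : u ≤ 2 * C := by rw [hu_def]; linarith
  set E := Real.exp u with hE_def
  have hE : 0 < E := Real.exp_pos u
  have hE1 : 1 + u ≤ E := by
    have := Real.add_one_le_exp u; linarith
  have hab : b = a * E := by
    rw [ha_def, hb_def, hE_def, hu_def, ← Real.exp_add]; ring_nf
  have haleb : a ≤ b := by nlinarith
  by_cases hcase : C ≤ E * (C - u)
  · -- easy regime
    have h1 : u * E ≤ C * E - C := by nlinarith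
    have h2 : u * b ≤ C * (b - a) := by
      have h3 := mul_le_mul_of_nonneg_left h1 ha.le
      nlinarith [h3, hab]
    nlinarith [mul_le_mul_of_nonneg_right h2 h1a.le, mul_le_mul_of_nonneg_left haleb hu]
  · push_neg at hcase
    -- hard regime: first derive u ≥ C - 1
    have hu1 : C - 1 ≤ u := by
      by_contra h
      push_neg at h
      have := exp_fact C u hu h.le
      rw [← hE_def] at this
      linarith
    have hbC : b ≤ Real.exp C := by rw [hb_def]; exact Real.exp_le_exp.mpr ht
    have hECu : Real.exp (C - u) * E = Real.exp C := by
      rw [hE_def, ← Real.exp_add]; ring_nf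
    have haM : a ≤ Real.exp (C - u) := by
      have h' : a * E ≤ Real.exp (C - u) * E := by rw [hECu, ← hab]; exact hbC
      exact le_of_mul_le_mul_right h' hE
    have hCpos : (0:ℝ) ≤ C := by linarith
    -- G(u) ≥ 0
    have hG : 0 ≤ C * (E - 1) - u + Real.exp C * (C - u) - C * Real.exp (C - u) := by
      rw [hE_def]
      exact G_nonneg C u hC hu1 hu2C
    -- combine
    have hneg : E * (C - u) - C ≤ 0 := by linarith
    have h5 : Real.exp (C - u) * (E * (C - u) - C) ≤ a * (E * (C - u) - C) :=
      mul_le_mul_of_nonpos_right haM hneg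
    have hid : Real.exp (C - u) * (E * (C - u) - C)
        = Real.exp C * (C - u) - C * Real.exp (C - u) := by
      rw [← hECu]; ring
    have h6 : 0 ≤ C * (E - 1) - u + a * (E * (C - u) - C) := by
      rw [hid] at h5; linarith [h5, hG]
    have h7 : 0 ≤ a * (C * (E - 1) - u + a * (E * (C - u) - C)) := mul_nonneg ha.le h6
    rw [hab]
    nlinarith [h7]

/-- Main inequality in the case `x ≤ y`. -/
lemma main_le (C : ℝ) (hC : 2 ≤ C) (x y : ℝ)
    (hx : x ∈ Set.Icc (-C) C) (hy : y ∈ Set.Icc (-C) C) (hxy : x ≤ y) :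
    logistic x * (1 - logistic x) * (y - x) ^ 2 ≤ 2 * C * klBer (logistic x) (logistic y) := by
  obtain ⟨hx1, hx2⟩ := hx
  obtain ⟨hy1, hy2⟩ := hy
  rw [kl_eq]
  set p := logistic x with hp_def
  set q := logistic x * (1 - logistic x) with hq_def
  set g : ℝ → ℝ := fun t => 2 * C * (Real.log (1 + Real.exp t) - p * t) - q * (t - x) ^ 2
    with hg_def
  have hder : ∀ t : ℝ, HasDerivAt g (2 * C * (logistic t - p) - q * (2 * (t - x))) t := by
    intro t
    have h1 : HasDerivAt (fun s : ℝ => 1 + Real.exp s) (Real.exp t) t :=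
      (Real.hasDerivAt_exp t).const_add 1
    have h2 : HasDerivAt (fun s : ℝ => Real.log (1 + Real.exp s))
        (Real.exp t / (1 + Real.exp t)) t :=
      h1.log (by positivity)
    have h3 : HasDerivAt (fun s : ℝ => Real.log (1 + Real.exp s) - p * s)
        (Real.exp t / (1 + Real.exp t) - p) t := by
      exact (h2.sub ((hasDerivAt_id t).const_mul p)).congr_deriv (by ring)
    have h4 : HasDerivAt (fun s : ℝ => (s - x) ^ 2) (2 * (t - x)) t := by
      have h5 : HasDerivAt (fun s : ℝ => s - x) 1 t := (hasDerivAt_id t).sub_const x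
      exact (h5.pow 2).congr_deriv (by norm_num)
    have hl : logistic t = Real.exp t / (1 + Real.exp t) := rfl
    rw [hl]
    exact (h3.const_mul (2 * C)).sub (h4.const_mul q)
  have hmono : MonotoneOn g (Set.Icc x y) := by
    apply monotoneOn_of_deriv_nonneg (convex_Icc x y)
    · exact fun t _ => ((hder t).differentiableAt).continuousAt.continuousWithinAt
    · exact fun t _ => ((hder t).differentiableAt).differentiableWithinAt
    · intro t ht
      rw [interior_Icc] at ht
      rw [(hder t).deriv]
      have hkey := key C x t hC hx1 ht.1.le (by linarith [ht.2])
      rw [← hq_def, ← hp_def] at hkey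
      nlinarith [hkey]
  have hgle : g x ≤ g y := hmono (Set.left_mem_Icc.mpr hxy) (Set.right_mem_Icc.mpr hxy) hxy
  have hgx : g x = 2 * C * (Real.log (1 + Real.exp x) - p * x) := by
    rw [hg_def]; simp
  have hgy : g y = 2 * C * (Real.log (1 + Real.exp y) - p * y) - q * (y - x) ^ 2 := rfl
  rw [hgx, hgy] at hgle
  nlinarith [hgle]

theorem stmt_0 (C : ℝ) (hC : 2 ≤ C) (x y : ℝ)
    (hx : x ∈ Set.Icc (-C) C) (hy : y ∈ Set.Icc (-C) C) :
    logistic x * (1 - logistic x) * (y - x) ^ 2 ≤ 2 * C * klBer (logistic x) (logistic y) := by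
  rcases le_total x y with hxy | hxy
  · exact main_le C hC x y hx hy hxy
  · have hx' : -x ∈ Set.Icc (-C) C := ⟨by linarith [hx.2], by linarith [hx.1]⟩
    have hy' : -y ∈ Set.Icc (-C) C := ⟨by linarith [hy.2], by linarith [hy.1]⟩
    have h := main_le C hC (-x) (-y) hx' hy' (by linarith)
    rw [logistic_neg, logistic_neg, klBer_one_sub] at h
    have h1 : (1 - logistic x) * (1 - (1 - logistic x)) = logistic x * (1 - logistic x) := by ring
    have h2 : (-y - -x) ^ 2 = (y - x) ^ 2 := by ring
    rw [h1, h2] at h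
    exact h
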